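/- If I is an ideal on a regular uncountable cardinal κ extending the bounded ideal, then the ineffability operator applied to I yields a normal ideal on κ: the collection I(I) of sets A ⊆ κ such that some κ-list restricted to A has no homogeneous subset of A in I⁺ is a normal ideal on κ. -/

import Mathlib

open Set

/-- `C` is unbounded in `δ`. -/
def UnbIn (δ : Ordinal) (C : Set Ordinal) : Prop :=
  ∀ β < δ, ∃ γ ∈ C, β ≤ γ ∧ γ < δ

/-- `a` is an `A`-list: `a α ⊆ α` for all `α ∈ A`. -/
def IsList (A : Set Ordinal) (a : Ordinal → Set Ordinal) : Prop :=
  ∀ α ∈ A, a α ⊆ Set.Iio α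

/-- `H` is homogeneous for the list `a`. -/
def Homog (a : Ordinal → Set Ordinal) (H : Set Ordinal) : Prop :=
  ∀ α ∈ H, ∀ β ∈ H, α < β → a α = a β ∩ Set.Iio α

/-- `κ` is (the ordinal of) a regular uncountable cardinal. -/
def RegUncountable (κ : Ordinal) : Prop :=
  κ.card.ord = κ ∧ κ.card.IsRegular ∧ Cardinal.aleph0 < κ.card

/-- An ideal on `κ`: extends the bounded ideal, closed under subsets and finite unions. -/
structure IsIdealOn (κ : Ordinal) (I : Set (Set Ordinal)) : Prop where
  subset_iio : ∀ A ∈ I, A ⊆ Set.Iio κ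
  bounded_mem : ∀ A, A ⊆ Set.Iio κ → ¬ UnbIn κ A → A ∈ I
  mono : ∀ A ∈ I, ∀ B, B ⊆ A → B ∈ I
  union_mem : ∀ A ∈ I, ∀ B ∈ I, A ∪ B ∈ I

/-- `f` is regressive on `A`. -/
def Regressive (A : Set Ordinal) (f : Ordinal → Ordinal) : Prop :=
  ∀ α ∈ A, α ≠ 0 → f α < α

/-- The ineffability operator `𝓘(I)`: the collection of `A ⊆ κ` such that some
`κ`-list (restricted to `A`) has no homogeneous subset of `A` in `I⁺`. -/
def IneffIdeal (κ : Ordinal) (I : Set (Set Ordinal)) : Set (Set Ordinal) :=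
  {A | A ⊆ Set.Iio κ ∧
    ¬ ∀ a : Ordinal → Set Ordinal, (∀ α, a α ⊆ Set.Iio α) →
      ∃ H, H ⊆ A ∧ H ∉ I ∧ Homog a H}

namespace IneffAux

open Ordinal Cardinal

/-- The club of ordinals closed under `γ ↦ 2*γ+2`. -/
def Cl : Set Ordinal := {α | ∀ γ < α, 2 * γ + 2 < α}

lemma zero_mem_Cl : (0:Ordinal) ∈ Cl := fun γ hγ => absurd hγ (not_lt_zero' (a := γ))

lemma two_mul_lt {α γ : Ordinal} (hα : α ∈ Cl) (h : γ < α) : 2 * γ < α :=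
  lt_of_le_of_lt le_self_add (hα γ h)

lemma two_mul_add_one_lt {α γ : Ordinal} (hα : α ∈ Cl) (h : γ < α) : 2 * γ + 1 < α :=
  lt_of_le_of_lt (add_le_add_right (by norm_num) _) (hα γ h)

lemma two_mul_inj {a b : Ordinal} (h : 2 * a = 2 * b) : a = b := by
  rcases lt_trichotomy a b with hab | hab | hab
  · exact absurd h ((mul_lt_mul_iff_right₀ (by norm_num)).2 hab).ne
  · exact hab
  · exact absurd h.symm ((mul_lt_mul_iff_right₀ (by norm_num)).2 hab).ne

lemma two_mul_ne (a b : Ordinal) : 2 * a ≠ 2 * b + 1 := by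
  intro h
  have hba : b < a := by
    have : 2 * b < 2 * a := h ▸ lt_add_of_pos_right _ one_pos
    exact (mul_lt_mul_iff_right₀ (by norm_num)).1 this
  have h1 : 2 * (b + 1) ≤ 2 * a := by
    apply mul_le_mul_right
    exact Order.add_one_le_of_lt hba
  rw [mul_add, mul_one, h] at h1
  have := (add_le_add_iff_left (2 * b)).1 h1
  norm_num at this

lemma two_mul_add_one_inj {a b : Ordinal} (h : 2 * a + 1 = 2 * b + 1) : a = b := by
  have : 2 * a = 2 * b := by
    rw [Ordinal.add_one_eq_succ, Ordinal.add_one_eq_succ] at h; exact Order.succ_injective h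
  exact two_mul_inj this

lemma lt_kappa_iff {κ δ : Ordinal} (h1 : κ.card.ord = κ) : δ < κ ↔ δ.card < κ.card := by
  conv_lhs => rw [← h1]
  exact Cardinal.lt_ord

lemma step_lt {κ : Ordinal} (h1 : κ.card.ord = κ) (h3 : ℵ₀ < κ.card)
    {γ : Ordinal} (h : γ < κ) : 2 * γ + 2 < κ := by
  rw [lt_kappa_iff h1] at h ⊢
  have hω : ℵ₀ ≤ κ.card := h3.le
  have h2 : ((2 : Ordinal)).card < κ.card := by
    rw [Ordinal.card_ofNat]
    exact lt_of_lt_of_le (Cardinal.nat_lt_aleph0 2) hω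
  rw [Ordinal.card_add, Ordinal.card_mul]
  exact Cardinal.add_lt_of_lt hω (Cardinal.mul_lt_of_lt hω h2 h) h2

lemma Cl_unbounded {κ : Ordinal} (h1 : κ.card.ord = κ) (h2 : κ.card.IsRegular)
    (h3 : ℵ₀ < κ.card) : ∀ β < κ, ∃ c ∈ Cl, β ≤ c ∧ c < κ := by
  intro β hβ
  set F : ℕ → Ordinal := fun n => Nat.rec β (fun _ x => 2 * x + 2) n with hF
  have hFs : ∀ n, F (n + 1) = 2 * F n + 2 := fun n => rfl
  have hFlt : ∀ n, F n < κ := by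
    intro n; induction n with
    | zero => exact hβ
    | succ n ih => rw [hFs]; exact step_lt h1 h3 ih
  have hFmono : ∀ n, F n < F (n + 1) := by
    intro n; rw [hFs]
    calc F n ≤ 2 * F n := by
          conv_lhs => rw [← one_mul (F n)]
          exact mul_le_mul_left (by norm_num) _
      _ < 2 * F n + 2 := lt_add_of_pos_right _ (by norm_num)
  have hFmono' : ∀ m n, m < n → F m < F n := by
    intro m n h
    induction n with
    | zero => omega
    | succ n ih =>
      rcases Nat.lt_succ_iff_lt_or_eq.1 h with h' | h'
      · exact (ih h').trans (hFmono n)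
      · exact h' ▸ hFmono m
  refine ⟨⨆ n, F n, ?_, ?_, ?_⟩
  · intro γ hγ
    rw [Ordinal.lt_iSup_iff] at hγ
    obtain ⟨n, hn⟩ := hγ
    have : 2 * γ + 2 ≤ F (n + 1) := by
      rw [hFs]
      exact add_le_add_left (mul_le_mul_right hn.le _) _
    exact lt_of_le_of_lt this (lt_of_lt_of_le (hFmono' (n+1) (n+2) (by omega))
      (Ordinal.le_iSup F (n+2)))
  · exact Ordinal.le_iSup F 0
  · refine Ordinal.iSup_lt_ord_lift ?_ hFlt
    rw [Cardinal.mk_nat, Cardinal.lift_aleph0, ← h1, h2.cof_eq]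
    exact h3

lemma g_lt {α : Ordinal} (h0 : α ∉ Cl) : sSup (Cl ∩ Iio α) < α := by
  have hαpos : 0 < α :=
    pos_iff_ne_zero.2 (fun h => h0 (h ▸ zero_mem_Cl))
  have hne : (Cl ∩ Iio α).Nonempty := ⟨0, zero_mem_Cl, hαpos⟩
  have hbdd : BddAbove (Cl ∩ Iio α) := ⟨α, fun x hx => le_of_lt hx.2⟩
  have hle : sSup (Cl ∩ Iio α) ≤ α := csSup_le hne (fun x hx => hx.2.le)
  rcases lt_or_eq_of_le hle with h | h
  · exact h
  · exfalso
    apply h0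
    intro γ hγ
    obtain ⟨c, hc, hγc⟩ := exists_lt_of_lt_csSup hne (h.symm ▸ hγ)
    exact lt_trans (hc.1 γ hγc) hc.2

end IneffAux

open IneffAux in
/-- Baumgartner: the ineffability operator applied to any ideal on a regular
uncountable cardinal `κ` yields a normal ideal on `κ`. -/
theorem ineffIdeal_isNormalIdeal (κ : Ordinal) (hκ : RegUncountable κ)
    (I : Set (Set Ordinal)) (hI : IsIdealOn κ I) (hproper : Set.Iio κ ∉ I) :
    IsIdealOn κ (IneffIdeal κ I) ∧
      (∀ A, A ⊆ Set.Iio κ → A ∉ IneffIdeal κ I →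
        ∀ f : Ordinal → Ordinal, Regressive A f →
          ∃ B β, B ⊆ A ∧ B ∉ IneffIdeal κ I ∧ ∀ α ∈ B, f α = β) := by
  classical
  obtain ⟨hk1, hk2, hk3⟩ := hκ
  have hωκ : Ordinal.omega0 ≤ κ := by
    rw [← Cardinal.ord_aleph0, ← hk1]
    exact Cardinal.ord_le_ord.2 hk3.le
  have h0κ : (0:Ordinal) < κ := lt_of_lt_of_le Ordinal.omega0_pos hωκ
  have h1κ : (1:Ordinal) < κ := lt_of_lt_of_le Ordinal.one_lt_omega0 hωκ
  have hκlim : Order.IsSuccLimit κ := by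
    rw [← hk1]; exact Cardinal.isSuccLimit_ord hk3.le
  -- positive sets are unbounded
  have posUnb : ∀ S, S ∉ I → S ⊆ Set.Iio κ → UnbIn κ S := by
    intro S hS hsub
    by_contra hn
    exact hS (hI.bounded_mem S hsub hn)
  -- {0} ∈ I
  have h0I : ({0} : Set Ordinal) ∈ I := by
    apply hI.bounded_mem _ (by intro x hx; rw [hx]; exact h0κ)
    intro h
    obtain ⟨γ, hγ, h1γ, _⟩ := h 1 h1κ
    rw [hγ] at h1γ
    exact absurd h1γ (by norm_num)
  -- splitting positivity
  have posSplit : ∀ S T U : Set Ordinal, S ∉ I → S ⊆ T ∪ U → T ∈ I → U ∉ I := by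
    intro S T U hS hsub hT hU
    exact hS (hI.mono _ (hI.union_mem T hT U hU) S hsub)
  -- extract witness from membership in IneffIdeal
  have memW : ∀ X ∈ IneffIdeal κ I, ∃ a : Ordinal → Set Ordinal,
      (∀ α, a α ⊆ Set.Iio α) ∧ ∀ H, H ⊆ X → H ∉ I → ¬ Homog a H := by
    intro X hX
    have := hX.2
    push_neg at this
    exact this
  -- extract from non-membership
  have nmemW : ∀ X, X ⊆ Set.Iio κ → X ∉ IneffIdeal κ I →
      ∀ a : Ordinal → Set Ordinal, (∀ α, a α ⊆ Set.Iio α) →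
        ∃ H, H ⊆ X ∧ H ∉ I ∧ Homog a H := by
    intro X hsub hX
    by_contra h
    push_neg at h
    obtain ⟨a, ha1, ha2⟩ := h
    apply hX
    refine ⟨hsub, ?_⟩
    intro hall
    obtain ⟨H, h1, h2, h3⟩ := hall a ha1
    exact ha2 H h1 h2 h3
  -- Part 1: ideal
  have hpart1 : IsIdealOn κ (IneffIdeal κ I) := by
    constructor
    · exact fun A hA => hA.1
    · -- bounded sets
      intro A hsub hbd
      refine ⟨hsub, ?_⟩
      intro hall
      obtain ⟨H, hH1, hH2, _⟩ := hall (fun _ => ∅) (by intro α; simp)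
      apply hH2
      apply hI.bounded_mem _ (hH1.trans hsub)
      intro hu
      exact hbd (fun β hβ => (hu β hβ).imp (fun γ hγ => ⟨hH1 hγ.1, hγ.2⟩))
    · -- mono
      intro A hA B hBA
      refine ⟨hBA.trans hA.1, ?_⟩
      intro hall
      obtain ⟨a, ha1, ha2⟩ := memW A hA
      obtain ⟨H, hH1, hH2, hH3⟩ := hall a ha1
      exact ha2 H (hH1.trans hBA) hH2 hH3
    · -- union
      intro A hA B hB
      obtain ⟨a, ha1, ha2⟩ := memW A hA
      obtain ⟨b, hb1, hb2⟩ := memW B hB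
      refine ⟨union_subset hA.1 hB.1, ?_⟩
      intro hall
      set d : Ordinal → Set Ordinal := fun α => if α ∈ A then a α else b α with hd
      have hdl : ∀ α, d α ⊆ Set.Iio α := by
        intro α
        by_cases h : α ∈ A <;> simp only [hd, if_pos, if_neg, h, ite_true, ite_false]
        exacts [ha1 α, hb1 α]
      obtain ⟨H, hH1, hH2, hH3⟩ := hall d hdl
      by_cases hHA : H ∩ A ∈ I
      · have hpos : H \ A ∉ I :=
          posSplit H (H ∩ A) (H \ A) hH2
            (fun x hx => by by_cases h : x ∈ A; exacts [Or.inl ⟨hx, h⟩, Or.inr ⟨hx, h⟩]) hHA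
        apply hb2 (H \ A) (fun x hx => ((hH1 hx.1).resolve_left hx.2)) hpos
        intro α hα β hβ hlt
        have := hH3 α hα.1 β hβ.1 hlt
        simpa only [hd, if_neg hα.2, if_neg hβ.2] using this
      · apply ha2 (H ∩ A) inter_subset_right hHA
        intro α hα β hβ hlt
        have := hH3 α hα.1 β hβ.1 hlt
        simpa only [hd, if_pos hα.2, if_pos hβ.2] using this
  refine ⟨hpart1, ?_⟩
  -- Part 2: normality
  intro A hAsub hApos f hreg
  by_contra hcon
  push_neg at hcon
  -- each fiber is in the ideal
  have hfib : ∀ β, {α | α ∈ A ∧ f α = β} ∈ IneffIdeal κ I := by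
    intro β
    by_contra h'
    obtain ⟨α, hαB, hne⟩ := hcon {α | α ∈ A ∧ f α = β} β (fun x hx => hx.1) h'
    exact hne hαB.2
  have hw : ∀ β, ∃ a : Ordinal → Set Ordinal, (∀ α, a α ⊆ Set.Iio α) ∧
      ∀ H, H ⊆ {α | α ∈ A ∧ f α = β} → H ∉ I → ¬ Homog a H :=
    fun β => memW _ (hfib β)
  choose a ha1 ha2 using hw
  -- A \ Cl is in the ineffability ideal
  have hD : A \ Cl ∈ IneffIdeal κ I := by
    refine ⟨(diff_subset).trans hAsub, ?_⟩
    intro hall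
    set e : Ordinal → Set Ordinal := fun α => {sSup (Cl ∩ Set.Iio α)} ∩ Set.Iio α with he
    obtain ⟨H, hH1, hH2, hH3⟩ := hall e (fun α => inter_subset_right)
    -- g is constant on H
    have hgmem : ∀ α ∈ H, sSup (Cl ∩ Set.Iio α) ∈ e α := by
      intro α hα
      exact ⟨rfl, g_lt (hH1 hα).2⟩
    have hgconst : ∀ α ∈ H, ∀ β ∈ H, α < β →
        sSup (Cl ∩ Set.Iio α) = sSup (Cl ∩ Set.Iio β) := by
      intro α hα β hβ hlt
      have h1 := hgmem α hα
      rw [hH3 α hα β hβ hlt] at h1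
      exact h1.1.1
    have hHunb : UnbIn κ H := posUnb H hH2 (hH1.trans ((diff_subset).trans hAsub))
    obtain ⟨α₀, hα₀H, _, hα₀κ⟩ := hHunb 0 h0κ
    obtain ⟨c, hcCl, hc1, hcκ⟩ := Cl_unbounded hk1 hk2 hk3 (α₀ + 1) (hκlim.succ_lt hα₀κ)
    obtain ⟨α, hαH, hcα, hακ⟩ := hHunb (c + 1) (hκlim.succ_lt hcκ)
    have hα₀c : α₀ < c := lt_of_lt_of_le
      (by rw [Ordinal.add_one_eq_succ]; exact Order.lt_succ α₀) hc1
    have hcα' : c < α := lt_of_lt_of_le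
      (by rw [Ordinal.add_one_eq_succ]; exact Order.lt_succ c) hcα
    have hα₀α : α₀ < α := hα₀c.trans hcα'
    have hgeq : sSup (Cl ∩ Set.Iio α₀) = sSup (Cl ∩ Set.Iio α) :=
      hgconst α₀ hα₀H α hαH hα₀α
    have hcle : c ≤ sSup (Cl ∩ Set.Iio α) :=
      le_csSup ⟨α, fun x hx => le_of_lt hx.2⟩ ⟨hcCl, hcα'⟩
    have : sSup (Cl ∩ Set.Iio α₀) < α₀ := g_lt (hH1 hα₀H).2
    rw [hgeq] at this
    exact absurd (this.trans hα₀c) (not_lt.2 hcle)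
  -- A ∩ Cl is positive
  have hAC : A ∩ Cl ∉ IneffIdeal κ I := by
    intro h
    apply hApos
    refine hpart1.mono _ (hpart1.union_mem _ h _ hD) A ?_
    intro x hx
    by_cases hc : x ∈ Cl
    exacts [Or.inl ⟨hx, hc⟩, Or.inr ⟨hx, hc⟩]
  set d : Ordinal → Set Ordinal := fun α =>
    ({2 * f α} ∪ (fun γ => 2 * γ + 1) '' a (f α) α) ∩ Set.Iio α with hd
  obtain ⟨H, hH1, hH2, hH3⟩ := nmemW (A ∩ Cl) (inter_subset_left.trans hAsub) hAC d
    (fun α => inter_subset_right)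
  set H' : Set Ordinal := H \ {0} with hH'
  have hH'pos : H' ∉ I := by
    intro h
    refine hH2 (hI.mono _ (hI.union_mem _ h _ h0I) H ?_)
    intro x hx
    by_cases hx0 : x = 0
    exacts [Or.inr hx0, Or.inl ⟨hx, hx0⟩]
  have hmem : ∀ α ∈ H', α ∈ A ∧ α ∈ Cl ∧ f α < α := by
    intro α hα
    obtain ⟨hA', hC'⟩ := hH1 hα.1
    exact ⟨hA', hC', hreg α hA' hα.2⟩
  have key1 : ∀ α ∈ H', ∀ β ∈ H', α < β → f α = f β := by
    intro α hα β hβ hlt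
    obtain ⟨hαA, hαC, hαf⟩ := hmem α hα
    have hdd := hH3 α hα.1 β hβ.1 hlt
    have h2f : 2 * f α ∈ d α := ⟨Or.inl rfl, two_mul_lt hαC hαf⟩
    rw [hdd] at h2f
    obtain ⟨⟨hu, _⟩, _⟩ := h2f
    rcases hu with h | ⟨γ, hγ, hgeq⟩
    · exact two_mul_inj (Set.mem_singleton_iff.1 h)
    · exact absurd hgeq.symm (two_mul_ne _ _)
  have hH'sub : H' ⊆ Set.Iio κ := fun x hx => hAsub (hmem x hx).1
  obtain ⟨α₀, hα₀, -, -⟩ := posUnb H' hH'pos hH'sub 0 h0κ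
  set β₀ := f α₀ with hβ₀
  have hconst : ∀ α ∈ H', f α = β₀ := by
    intro α hα
    rcases lt_trichotomy α α₀ with h | h | h
    · exact key1 α hα α₀ hα₀ h
    · rw [h]
    · exact (key1 α₀ hα₀ α hα h).symm
  have key2 : Homog (a β₀) H' := by
    intro α hα β hβ hlt
    obtain ⟨hαA, hαC, hαf⟩ := hmem α hα
    obtain ⟨hβA, hβC, hβf⟩ := hmem β hβ
    have hdd := hH3 α hα.1 β hβ.1 hlt
    ext γ
    simp only [Set.mem_inter_iff, Set.mem_Iio]
    constructor
    · intro hγ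
      have hγα : γ < α := ha1 β₀ α hγ
      have hmem1 : 2 * γ + 1 ∈ d α := by
        refine ⟨Or.inr ⟨γ, ?_, rfl⟩, two_mul_add_one_lt hαC hγα⟩
        rw [hconst α hα]; exact hγ
      rw [hdd] at hmem1
      obtain ⟨⟨hu, -⟩, -⟩ := hmem1
      rcases hu with h | ⟨γ', hγ', heq⟩
      · exact absurd (Set.mem_singleton_iff.1 h).symm (two_mul_ne _ _)
      · obtain rfl : γ' = γ := two_mul_add_one_inj heq
        rw [hconst β hβ] at hγ'
        exact ⟨hγ', hγα⟩
    · rintro ⟨hγ, hγα⟩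
      have hγβ : γ < β := ha1 β₀ β hγ
      have hmem1 : 2 * γ + 1 ∈ d β ∩ Set.Iio α := by
        refine ⟨⟨Or.inr ⟨γ, ?_, rfl⟩, two_mul_add_one_lt hβC hγβ⟩,
          two_mul_add_one_lt hαC hγα⟩
        rw [hconst β hβ]; exact hγ
      rw [← hdd] at hmem1
      obtain ⟨hu, -⟩ := hmem1
      rcases hu with h | ⟨γ', hγ', heq⟩
      · exact absurd (Set.mem_singleton_iff.1 h).symm (two_mul_ne _ _)
      · obtain rfl : γ' = γ := two_mul_add_one_inj heq
        rw [hconst α hα] at hγ'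
        exact hγ'
  exact ha2 β₀ H' (fun x hx => ⟨(hmem x hx).1, hconst x hx⟩) hH'pos key2
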